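/- The set W of Kolchin dimension polynomials is closed under positive shift: if ω(s) ∈ W and j ∈ ℕ, then the polynomial ω(s + j) also belongs to W. -/

import Mathlib

open Filter Finset Polynomial

/-- The binomial coefficient polynomial C(x, k) = x(x-1)...(x-k+1)/k! over ℚ. -/
noncomputable def qchoose (x : ℚ) (k : ℕ) : ℚ :=
  (∏ i ∈ Finset.range k, (x - i)) / (Nat.factorial k)


/-- ω_E(s): number of points of ℕ^m of order ≤ s not componentwise above any element of E. -/
noncomputable def omegaE {m : ℕ} (E : Set (Fin m → ℕ)) (s : ℕ) : ℕ :=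
  Set.ncard {x : Fin m → ℕ | (∑ i, x i) ≤ s ∧ ∀ e ∈ E, ¬ e ≤ x}


/-- W: the set of Kolchin dimension polynomials, i.e. numerical polynomials that agree
eventually with ω_E for some m and E ⊆ ℕ^m. -/
noncomputable def IsKolchin (p : Polynomial ℚ) : Prop :=
  ∃ (m : ℕ) (E : Set (Fin m → ℕ)),
    ∀ᶠ s : ℕ in Filter.atTop, (omegaE E s : ℚ) = p.eval (s : ℚ)

namespace KolchinAux
def SS {m : ℕ} (E : Set (Fin m → ℕ)) (s : ℕ) : Set (Fin m → ℕ) :=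
  {x | (∑ i, x i) ≤ s ∧ ∀ e ∈ E, ¬ e ≤ x}

lemma omegaE_eq {m : ℕ} (E : Set (Fin m → ℕ)) (s : ℕ) : omegaE E s = (SS E s).ncard := rfl

lemma mem_SS {m : ℕ} {E : Set (Fin m → ℕ)} {s : ℕ} {x : Fin m → ℕ} :
    x ∈ SS E s ↔ (∑ i, x i) ≤ s ∧ ∀ e ∈ E, ¬ e ≤ x := Iff.rfl

lemma SS_finite {m : ℕ} (E : Set (Fin m → ℕ)) (s : ℕ) : (SS E s).Finite := by
  apply Set.Finite.subset (Set.finite_Iic (fun _ => s : Fin m → ℕ))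
  intro x hx
  rw [Set.mem_Iic]
  intro i
  exact le_trans (Finset.single_le_sum (fun i _ => Nat.zero_le (x i)) (Finset.mem_univ i)) hx.1

lemma pi_le_zero_iff {m : ℕ} {e : Fin m → ℕ} : e ≤ 0 ↔ e = 0 := by
  constructor
  · intro h; funext i; exact Nat.le_zero.mp (h i)
  · intro h; exact h.le

lemma zero_mem_SS {m : ℕ} {E : Set (Fin m → ℕ)} (h0 : (0 : Fin m → ℕ) ∉ E) (s : ℕ) :
    (0 : Fin m → ℕ) ∈ SS E s := by
  refine ⟨by simp, fun e he hle => h0 ?_⟩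
  rwa [pi_le_zero_iff.mp hle] at he

lemma one_le_omegaE {m : ℕ} {E : Set (Fin m → ℕ)} (h0 : (0 : Fin m → ℕ) ∉ E) (s : ℕ) :
    1 ≤ omegaE E s := by
  rw [omegaE_eq]
  exact (Set.ncard_pos (SS_finite E s)).mpr ⟨0, zero_mem_SS h0 s⟩

lemma omegaE_of_zero_mem {m : ℕ} {E : Set (Fin m → ℕ)} (h0 : (0 : Fin m → ℕ) ∈ E) (s : ℕ) :
    omegaE E s = 0 := by
  rw [omegaE_eq]
  have : SS E s = ∅ := by
    ext x
    simp only [mem_SS, Set.mem_empty_iff_false, iff_false, not_and]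
    intro _ h
    exact absurd (fun i => Nat.zero_le _) (h 0 h0)
  rw [this, Set.ncard_empty]

lemma const_omega (c : ℕ) : ∃ (m : ℕ) (E : Set (Fin m → ℕ)),
    ∀ s ≥ c, omegaE E s = c := by
  refine ⟨1, {fun _ => c}, fun s hs => ?_⟩
  rw [omegaE_eq]
  have hset : SS {fun _ => c} s = (fun n => (fun _ => n : Fin 1 → ℕ)) '' Set.Iio c := by
    ext x
    simp only [SS, Set.mem_setOf_eq, Set.mem_image, Set.mem_Iio, Set.mem_singleton_iff,
      forall_eq, Fin.sum_univ_one]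
    constructor
    · rintro ⟨h1, h2⟩
      refine ⟨x 0, ?_, ?_⟩
      · by_contra h
        push_neg at h
        exact h2 (fun i => by rw [Subsingleton.elim i 0]; exact h)
      · funext i
        rw [Subsingleton.elim i 0]
    · rintro ⟨n, hn, rfl⟩
      refine ⟨?_, fun h => ?_⟩
      · show n ≤ s
        omega
      · have h0 : c ≤ n := h 0
        omega
  rw [hset, Set.ncard_image_of_injective _ (fun a b h => congrFun h 0)]
  rw [← Finset.coe_Iio, Set.ncard_coe_finset, Nat.card_Iio]

lemma single_one_le_iff {m : ℕ} {i : Fin m} {f : Fin m → ℕ} :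
    Pi.single i 1 ≤ f ↔ 1 ≤ f i := by
  constructor
  · intro h; simpa using h i
  · intro h k
    rcases eq_or_ne k i with rfl | hk
    · simpa using h
    · simp [Pi.single_eq_of_ne hk]

lemma sum_tail {m : ℕ} (x : Fin (m+1) → ℕ) : (∑ i, x i) = x 0 + ∑ i, Fin.tail x i :=
  Fin.sum_univ_succ x

lemma cons_inj_right {m : ℕ} (a : ℕ) :
    Function.Injective (fun y : Fin m → ℕ => (Fin.cons a y : Fin (m+1) → ℕ)) := by
  intro y z h
  have := congrArg Fin.tail h
  simpa [Fin.tail_cons] using this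

lemma addConst {m : ℕ} (E : Set (Fin m → ℕ)) (c : ℕ) :
    ∃ (m' : ℕ) (E' : Set (Fin m' → ℕ)),
      ∀ᶠ s in atTop, omegaE E' s = omegaE E s + c := by
  by_cases h0 : (0 : Fin m → ℕ) ∈ E
  · obtain ⟨m', E', h⟩ := const_omega c
    exact ⟨m', E', (eventually_ge_atTop c).mono fun s hs => by
      rw [h s hs, omegaE_of_zero_mem h0, Nat.zero_add]⟩
  · refine ⟨m+1,
      (Fin.cons 0 '' E) ∪ ((⋃ i : Fin m, {Fin.cons 1 (Pi.single i 1)}) ∪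
        {Fin.cons (c+1) (0 : Fin m → ℕ)}),
      (eventually_ge_atTop c).mono fun s hs => ?_⟩
    have key : SS ((Fin.cons 0 '' E) ∪ ((⋃ i : Fin m, {Fin.cons 1 (Pi.single i 1)}) ∪
        {Fin.cons (c+1) (0 : Fin m → ℕ)})) s
        = (Fin.cons 0 '' SS E s) ∪
          ((fun t : ℕ => (Fin.cons t (0 : Fin m → ℕ) : Fin (m+1) → ℕ)) '' Set.Icc 1 c) := by
      ext x
      simp only [mem_SS, Set.mem_union, Set.mem_image, Set.mem_iUnion, Set.mem_singleton_iff,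
        Set.mem_Icc]
      constructor
      · rintro ⟨hsum, havoid⟩
        have hx : x = Fin.cons (x 0) (Fin.tail x) := (Fin.cons_self_tail x).symm
        have hA : ∀ e ∈ E, ¬ (Fin.cons 0 e : Fin (m+1) → ℕ) ≤ x :=
          fun e he => havoid _ (Or.inl ⟨e, he, rfl⟩)
        have hB : ∀ i : Fin m, ¬ (Fin.cons 1 (Pi.single i 1) : Fin (m+1) → ℕ) ≤ x :=
          fun i => havoid _ (Or.inr (Or.inl ⟨i, rfl⟩))
        have hC : ¬ (Fin.cons (c+1) (0 : Fin m → ℕ) : Fin (m+1) → ℕ) ≤ x :=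
          havoid _ (Or.inr (Or.inr rfl))
        rcases Nat.eq_zero_or_pos (x 0) with hz | hpos
        · left
          refine ⟨Fin.tail x, ⟨?_, fun e he hle => hA e he ?_⟩, ?_⟩
          · calc (∑ i, Fin.tail x i) ≤ x 0 + ∑ i, Fin.tail x i := Nat.le_add_left _ _
            _ = ∑ i, x i := (sum_tail x).symm
            _ ≤ s := hsum
          · rw [hx]; exact Fin.cons_le_cons.mpr ⟨Nat.zero_le _, hle⟩
          · conv_rhs => rw [hx]
            rw [hz]
        · right
          have htail : Fin.tail x = 0 := by
            funext i
            by_contra hne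
            refine hB i ?_
            rw [hx]
            exact Fin.cons_le_cons.mpr ⟨hpos, single_one_le_iff.mpr (Nat.pos_of_ne_zero hne)⟩
          have hle : x 0 ≤ c := by
            by_contra hgt
            refine hC ?_
            rw [hx, htail]
            exact Fin.cons_le_cons.mpr ⟨by omega, le_refl _⟩
          refine ⟨x 0, ⟨hpos, hle⟩, ?_⟩
          conv_rhs => rw [hx, htail]
      · rintro (⟨y, ⟨hysum, hyavoid⟩, rfl⟩ | ⟨t, ⟨ht1, htc⟩, rfl⟩)
        · constructor
          · rw [sum_tail]
            simp only [Fin.cons_zero, Fin.tail_cons]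
            omega
          · rintro e (⟨f, hf, rfl⟩ | (⟨i, rfl⟩ | rfl))
            · intro hle
              exact hyavoid f hf (Fin.cons_le_cons.mp hle).2
            · intro hle
              exact absurd (Fin.cons_le_cons.mp hle).1 (by omega)
            · intro hle
              exact absurd (Fin.cons_le_cons.mp hle).1 (by omega)
        · constructor
          · rw [sum_tail]
            simp only [Fin.cons_zero, Fin.tail_cons]
            have hz0 : (∑ i : Fin m, (0 : Fin m → ℕ) i) = 0 := by simp
            omega
          · rintro e (⟨f, hf, rfl⟩ | (⟨i, rfl⟩ | rfl))
            · intro hle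
              have := (Fin.cons_le_cons.mp hle).2
              exact h0 (by rwa [pi_le_zero_iff.mp this] at hf)
            · intro hle
              have := single_one_le_iff.mp (Fin.cons_le_cons.mp hle).2
              exact Nat.not_succ_le_zero 0 this
            · intro hle
              have := (Fin.cons_le_cons.mp hle).1
              omega
    have hdisj : Disjoint (Fin.cons 0 '' SS E s)
        ((fun t : ℕ => (Fin.cons t (0 : Fin m → ℕ) : Fin (m+1) → ℕ)) '' Set.Icc 1 c) := by
      rw [Set.disjoint_left]
      rintro x ⟨y, _, rfl⟩ ⟨t, ⟨ht1, _⟩, hx⟩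
      have h00 := congrFun hx 0
      simp only [Fin.cons_zero] at h00
      omega
    rw [omegaE_eq, key,
      Set.ncard_union_eq hdisj ((SS_finite E s).image _) ((Set.finite_Icc 1 c).image _),
      Set.ncard_image_of_injective _ (cons_inj_right 0),
      Set.ncard_image_of_injective _
        (fun a b h => by simpa using congrFun h 0 : Function.Injective
          (fun t : ℕ => (Fin.cons t (0 : Fin m → ℕ) : Fin (m+1) → ℕ))),
      ← Finset.coe_Icc, Set.ncard_coe_finset, Nat.card_Icc, omegaE_eq]
    omega

lemma append_decomp {a b : ℕ} (x : Fin (a+b) → ℕ) :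
    x = Fin.append (x ∘ Fin.castAdd b) (x ∘ Fin.natAdd a) := by
  funext i
  refine Fin.addCases (fun i => ?_) (fun i => ?_) i
  · rw [Fin.append_left]; rfl
  · rw [Fin.append_right]; rfl

lemma append_le_append {a b : ℕ} {u u' : Fin a → ℕ} {v v' : Fin b → ℕ} :
    Fin.append u v ≤ Fin.append u' v' ↔ u ≤ u' ∧ v ≤ v' := by
  constructor
  · intro h
    constructor
    · intro i; simpa [Fin.append_left] using h (Fin.castAdd b i)
    · intro k; simpa [Fin.append_right] using h (Fin.natAdd a k)
  · rintro ⟨h1, h2⟩ i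
    refine Fin.addCases (fun i => ?_) (fun k => ?_) i
    · simpa [Fin.append_left] using h1 i
    · simpa [Fin.append_right] using h2 k

lemma sum_append {a b : ℕ} (u : Fin a → ℕ) (v : Fin b → ℕ) :
    (∑ i, Fin.append u v i) = (∑ i, u i) + ∑ i, v i := by
  rw [Fin.sum_univ_add]
  simp [Fin.append_left, Fin.append_right]

lemma sum_zero_pi {a : ℕ} : (∑ i : Fin a, (0 : Fin a → ℕ) i) = 0 := by simp

lemma sum_minus {m₁ m₂ : ℕ} (E₁ : Set (Fin m₁ → ℕ)) (E₂ : Set (Fin m₂ → ℕ))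
    (h1 : (0 : Fin m₁ → ℕ) ∉ E₁) (h2 : (0 : Fin m₂ → ℕ) ∉ E₂) :
    ∃ (M : ℕ) (G : Set (Fin M → ℕ)), ∀ s, omegaE G s + 1 = omegaE E₁ s + omegaE E₂ s := by
  refine ⟨m₁ + m₂,
    ((fun e => Fin.append e (0 : Fin m₂ → ℕ)) '' E₁) ∪
      (((fun e => Fin.append (0 : Fin m₁ → ℕ) e) '' E₂) ∪
        (⋃ i : Fin m₁, ⋃ k : Fin m₂, {Fin.append (Pi.single i 1) (Pi.single k 1)})),
    fun s => ?_⟩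
  have key : SS (((fun e => Fin.append e (0 : Fin m₂ → ℕ)) '' E₁) ∪
      (((fun e => Fin.append (0 : Fin m₁ → ℕ) e) '' E₂) ∪
        (⋃ i : Fin m₁, ⋃ k : Fin m₂, {Fin.append (Pi.single i 1) (Pi.single k 1)}))) s
      = ((fun u => Fin.append u (0 : Fin m₂ → ℕ)) '' SS E₁ s) ∪
        ((fun v => Fin.append (0 : Fin m₁ → ℕ) v) '' (SS E₂ s \ {0})) := by
    ext x
    simp only [mem_SS, Set.mem_union, Set.mem_image, Set.mem_iUnion, Set.mem_singleton_iff,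
      Set.mem_diff]
    constructor
    · rintro ⟨hsum, havoid⟩
      have hA : ∀ e ∈ E₁, ¬ Fin.append e (0 : Fin m₂ → ℕ) ≤ x :=
        fun e he => havoid _ (Or.inl ⟨e, he, rfl⟩)
      have hB : ∀ e ∈ E₂, ¬ Fin.append (0 : Fin m₁ → ℕ) e ≤ x :=
        fun e he => havoid _ (Or.inr (Or.inl ⟨e, he, rfl⟩))
      have hC : ∀ (i : Fin m₁) (k : Fin m₂),
          ¬ Fin.append (Pi.single i 1) (Pi.single k 1) ≤ x :=
        fun i k => havoid _ (Or.inr (Or.inr ⟨i, k, rfl⟩))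
      have hx := append_decomp x
      rw [hx, sum_append] at hsum
      by_cases hv0 : x ∘ Fin.natAdd m₁ = 0
      · left
        refine ⟨x ∘ Fin.castAdd m₂, ⟨by omega, fun e he hle => hA e he ?_⟩, ?_⟩
        · rw [hx]
          exact append_le_append.mpr ⟨hle, fun k => Nat.zero_le _⟩
        · conv_rhs => rw [hx]
          rw [hv0]
      · right
        obtain ⟨k, hk⟩ := Function.ne_iff.mp hv0
        have hu0 : x ∘ Fin.castAdd m₂ = 0 := by
          funext i
          by_contra hne
          refine hC i k ?_
          rw [hx]
          refine append_le_append.mpr ⟨single_one_le_iff.mpr ?_, single_one_le_iff.mpr ?_⟩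
          · exact Nat.pos_of_ne_zero hne
          · exact Nat.pos_of_ne_zero hk
        refine ⟨x ∘ Fin.natAdd m₁, ⟨⟨by omega, fun e he hle => hB e he ?_⟩, hv0⟩, ?_⟩
        · rw [hx]
          exact append_le_append.mpr ⟨fun i => Nat.zero_le _, hle⟩
        · conv_rhs => rw [hx]
          rw [hu0]
    · rintro (⟨u, ⟨hus, hua⟩, rfl⟩ | ⟨v, ⟨⟨hvs, hva⟩, hvne⟩, rfl⟩)
      · refine ⟨?_, ?_⟩
        · rw [sum_append]
          have := sum_zero_pi (a := m₂)
          omega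
        · rintro e (⟨f, hf, rfl⟩ | (⟨f, hf, rfl⟩ | ⟨i, k, rfl⟩)) hle
          · exact hua f hf (append_le_append.mp hle).1
          · exact h2 (by rwa [pi_le_zero_iff.mp (append_le_append.mp hle).2] at hf)
          · exact Nat.not_succ_le_zero 0 (single_one_le_iff.mp (append_le_append.mp hle).2)
      · refine ⟨?_, ?_⟩
        · rw [sum_append]
          have := sum_zero_pi (a := m₁)
          omega
        · rintro e (⟨f, hf, rfl⟩ | (⟨f, hf, rfl⟩ | ⟨i, k, rfl⟩)) hle
          · exact h1 (by rwa [pi_le_zero_iff.mp (append_le_append.mp hle).1] at hf)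
          · exact hva f hf (append_le_append.mp hle).2
          · exact Nat.not_succ_le_zero 0 (single_one_le_iff.mp (append_le_append.mp hle).1)
  have hdisj : Disjoint ((fun u => Fin.append u (0 : Fin m₂ → ℕ)) '' SS E₁ s)
      ((fun v => Fin.append (0 : Fin m₁ → ℕ) v) '' (SS E₂ s \ {0})) := by
    rw [Set.disjoint_left]
    rintro x ⟨u, _, rfl⟩ ⟨v, ⟨_, hvne⟩, hx⟩
    refine hvne ?_
    funext k
    have := congrFun hx (Fin.natAdd m₁ k)
    simp only [Fin.append_right] at this
    exact this
  have hinj1 : Function.Injective (fun u : Fin m₁ → ℕ => Fin.append u (0 : Fin m₂ → ℕ)) := by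
    intro a b h
    funext i
    have := congrFun h (Fin.castAdd m₂ i)
    simpa [Fin.append_left] using this
  have hinj2 : Function.Injective (fun v : Fin m₂ → ℕ => Fin.append (0 : Fin m₁ → ℕ) v) := by
    intro a b h
    funext k
    have := congrFun h (Fin.natAdd m₁ k)
    simpa [Fin.append_right] using this
  have hcard2 : (SS E₂ s \ {0}).ncard + 1 = omegaE E₂ s :=
    Set.ncard_diff_singleton_add_one (zero_mem_SS h2 s) (SS_finite E₂ s)
  rw [omegaE_eq, key,
    Set.ncard_union_eq hdisj ((SS_finite E₁ s).image _) (((SS_finite E₂ s).diff).image _),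
    Set.ncard_image_of_injective _ hinj1, Set.ncard_image_of_injective _ hinj2, ← omegaE_eq]
  omega

lemma sum_omega {m₁ m₂ : ℕ} (E₁ : Set (Fin m₁ → ℕ)) (E₂ : Set (Fin m₂ → ℕ)) :
    ∃ (M : ℕ) (G : Set (Fin M → ℕ)),
      ∀ᶠ s in atTop, omegaE G s = omegaE E₁ s + omegaE E₂ s := by
  by_cases h1 : (0 : Fin m₁ → ℕ) ∈ E₁
  · exact ⟨m₂, E₂, Eventually.of_forall fun s => by
      rw [omegaE_of_zero_mem h1, Nat.zero_add]⟩
  by_cases h2 : (0 : Fin m₂ → ℕ) ∈ E₂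
  · exact ⟨m₁, E₁, Eventually.of_forall fun s => by
      rw [omegaE_of_zero_mem h2, Nat.add_zero]⟩
  obtain ⟨M, G, hG⟩ := sum_minus E₁ E₂ h1 h2
  obtain ⟨M', G', hG'⟩ := addConst G 1
  exact ⟨M', G', hG'.mono fun s hs => by rw [hs, ← hG s]⟩

lemma le_headtail {m : ℕ} {e x : Fin (m+1) → ℕ} :
    e ≤ x ↔ e 0 ≤ x 0 ∧ Fin.tail e ≤ Fin.tail x := by
  constructor
  · intro h; exact ⟨h 0, fun i => h i.succ⟩
  · rintro ⟨h0, ht⟩ i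
    refine Fin.cases h0 (fun k => ht k) i

def Eup {m : ℕ} (E : Set (Fin (m+1) → ℕ)) : Set (Fin (m+1) → ℕ) :=
  (fun e => (Fin.cons (e 0 - 1) (Fin.tail e) : Fin (m+1) → ℕ)) '' E

def E0 {m : ℕ} (E : Set (Fin (m+1) → ℕ)) : Set (Fin m → ℕ) :=
  Fin.tail '' {e | e ∈ E ∧ e 0 = 0}

lemma decomp {m : ℕ} (E : Set (Fin (m+1) → ℕ)) (s : ℕ) :
    omegaE E (s + 1) = omegaE (Eup E) s + omegaE (E0 E) (s + 1) := by
  have key : SS E (s+1) =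
      ((fun y : Fin (m+1) → ℕ => (Fin.cons (y 0 + 1) (Fin.tail y) : Fin (m+1) → ℕ)) ''
        SS (Eup E) s) ∪
      ((fun z : Fin m → ℕ => (Fin.cons 0 z : Fin (m+1) → ℕ)) '' SS (E0 E) (s+1)) := by
    ext x
    simp only [mem_SS, Set.mem_union, Set.mem_image]
    constructor
    · rintro ⟨hsum, havoid⟩
      rw [sum_tail] at hsum
      rcases Nat.eq_zero_or_pos (x 0) with hz | hpos
      · right
        refine ⟨Fin.tail x, ⟨by omega, ?_⟩, ?_⟩
        · rintro f ⟨e, ⟨he, he0⟩, rfl⟩ hle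
          exact havoid e he (le_headtail.mpr ⟨by omega, hle⟩)
        · conv_rhs => rw [← Fin.cons_self_tail x]
          rw [hz]
      · left
        refine ⟨(Fin.cons (x 0 - 1) (Fin.tail x) : Fin (m+1) → ℕ), ⟨?_, ?_⟩, ?_⟩
        · rw [sum_tail]
          simp only [Fin.cons_zero, Fin.tail_cons]
          omega
        · rintro f ⟨e, he, rfl⟩ hle
          rw [Fin.cons_le_cons] at hle
          refine havoid e he (le_headtail.mpr ⟨?_, hle.2⟩)
          have := hle.1
          omega
        · simp only [Fin.cons_zero, Fin.tail_cons]
          have h1 : x 0 - 1 + 1 = x 0 := by omega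
          rw [h1, Fin.cons_self_tail]
    · rintro (⟨y, ⟨hys, hya⟩, rfl⟩ | ⟨z, ⟨hzs, hza⟩, rfl⟩)
      · rw [sum_tail] at hys ⊢
        simp only [Fin.cons_zero, Fin.tail_cons]
        refine ⟨by omega, fun e he hle => ?_⟩
        rw [le_headtail] at hle
        simp only [Fin.cons_zero, Fin.tail_cons] at hle
        refine hya _ ⟨e, he, rfl⟩ ?_
        rw [← Fin.cons_self_tail y, Fin.cons_le_cons]
        exact ⟨by omega, hle.2⟩
      · rw [sum_tail]
        simp only [Fin.cons_zero, Fin.tail_cons]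
        refine ⟨by omega, fun e he hle => ?_⟩
        rw [le_headtail] at hle
        simp only [Fin.cons_zero, Fin.tail_cons] at hle
        exact hza _ ⟨e, ⟨he, by omega⟩, rfl⟩ hle.2
  have hdisj : Disjoint
      ((fun y : Fin (m+1) → ℕ => (Fin.cons (y 0 + 1) (Fin.tail y) : Fin (m+1) → ℕ)) ''
        SS (Eup E) s)
      ((fun z : Fin m → ℕ => (Fin.cons 0 z : Fin (m+1) → ℕ)) '' SS (E0 E) (s+1)) := by
    rw [Set.disjoint_left]
    rintro x ⟨y, _, rfl⟩ ⟨z, _, hx⟩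
    have := congrFun hx 0
    simp only [Fin.cons_zero] at this
    omega
  have hinj : Function.Injective
      (fun y : Fin (m+1) → ℕ => (Fin.cons (y 0 + 1) (Fin.tail y) : Fin (m+1) → ℕ)) := by
    intro a b h
    have h0 := congrFun h 0
    simp only [Fin.cons_zero] at h0
    have ht := congrArg Fin.tail h
    simp only [Fin.tail_cons] at ht
    have ha0 : a 0 = b 0 := by omega
    rw [← Fin.cons_self_tail a, ← Fin.cons_self_tail b, ht, ha0]
  rw [omegaE_eq, key,
    Set.ncard_union_eq hdisj ((SS_finite _ s).image _) ((SS_finite _ (s+1)).image _),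
    Set.ncard_image_of_injective _ hinj, Set.ncard_image_of_injective _ (cons_inj_right 0),
    ← omegaE_eq, ← omegaE_eq]

lemma shift1 : ∀ (m : ℕ) (E : Set (Fin m → ℕ)), ∃ (m' : ℕ) (E' : Set (Fin m' → ℕ)),
    ∀ᶠ s in atTop, omegaE E' s = omegaE E (s + 1) := by
  intro m
  induction m with
  | zero =>
    intro E
    refine ⟨0, E, Eventually.of_forall fun s => ?_⟩
    rw [omegaE_eq, omegaE_eq]
    congr 1
    ext x
    simp [mem_SS]
  | succ n ih =>
    intro E
    obtain ⟨mF, F, hF⟩ := ih (E0 E)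
    obtain ⟨M, G, hG⟩ := sum_omega (Eup E) F
    refine ⟨M, G, ?_⟩
    filter_upwards [hG, hF] with s h1 h2
    rw [h1, h2, ← decomp E s]

lemma shiftj (m : ℕ) (E : Set (Fin m → ℕ)) (j : ℕ) :
    ∃ (m' : ℕ) (E' : Set (Fin m' → ℕ)),
      ∀ᶠ s in atTop, omegaE E' s = omegaE E (s + j) := by
  induction j with
  | zero => exact ⟨m, E, Eventually.of_forall fun s => rfl⟩
  | succ j ih =>
    obtain ⟨mF, F, hF⟩ := ih
    obtain ⟨M, G, hG⟩ := shift1 mF F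
    refine ⟨M, G, ?_⟩
    have hF' : ∀ᶠ s in atTop, omegaE F (s + 1) = omegaE E (s + 1 + j) :=
      (tendsto_add_atTop_nat 1).eventually hF
    filter_upwards [hG, hF'] with s h1 h2
    rw [h1, h2]
    congr 1
    omega
end KolchinAux

/-- W is closed under positive shift: if ω(s) ∈ W and j ∈ ℕ then ω(s + j) ∈ W. -/
theorem isKolchin_shift (p : Polynomial ℚ) (hp : IsKolchin p) (j : ℕ) :
    IsKolchin (p.comp (Polynomial.X + Polynomial.C (j : ℚ))) := by
  obtain ⟨m, E, hE⟩ := hp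
  obtain ⟨m', E', hE'⟩ := KolchinAux.shiftj m E j
  refine ⟨m', E', ?_⟩
  have hshift : ∀ᶠ s : ℕ in atTop, (omegaE E (s + j) : ℚ) = p.eval ((s + j : ℕ) : ℚ) :=
    (tendsto_add_atTop_nat j).eventually hE
  filter_upwards [hE', hshift] with s h1 h2
  rw [h1, h2, Polynomial.eval_comp]
  push_cast
  simp
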